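/- arXiv:2512.06832 — 2 statements merged into one kernel-verified Lean document; each statement's English description precedes it below -/
import Mathlib

section
/- Let A = ⟨Q, Σ, I, δ, F⟩ be a fuzzy automaton over a linear complete residuated lattice and ε ∈ L. The greatest right ε-invariance on A exists and equals ⋀_ε { F_w /_ε F_w : w ∈ Σ* }, where (F_w /_ε F_w)(p,q) := (F_w(q) →_ε F_w(p)). Moreover, this greatest right ε-invariance is an ε-FPO on Q. -/
/-- A linear and complete residuated lattice: a complete linear order carrying a
commutative monoid structure whose unit `1` is the greatest element, together with a
residuum satisfying the adjunction property. -/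
class ResiduatedLattice (L : Type*) extends CompleteLinearOrder L, CommMonoid L where
  res : L → L → L
  adjunction : ∀ x y z : L, x * y ≤ z ↔ x ≤ res y z
  one_eq_top : (1 : L) = ⊤

variable {L : Type*} [ResiduatedLattice L]

/-- `x ≤_ε y` iff `x ≤ y` or `x ≤ ε`. -/
def leE (ε x y : L) : Prop := x ≤ y ∨ x ≤ ε

/-- `x =_ε y` iff `x ≤_ε y` and `y ≤_ε x`. -/
def eqE (ε x y : L) : Prop := leE ε x y ∧ leE ε y x

/-- `x ⊗_ε y` is `x ⊗ y` if `x ⊗ y > ε`, and `ε` otherwise. -/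
def mulE (ε x y : L) : L := if ε < x * y then x * y else ε

/-- `x →_ε y := (x ∨ ε) → (y ∨ ε)`. -/
def resE (ε x y : L) : L := ResiduatedLattice.res (x ⊔ ε) (y ⊔ ε)

/-- Composition of fuzzy relations: `(r ∘ s)(a,b) = sup_c r(a,c) ⊗ s(c,b)`. -/
noncomputable def relComp {X : Type*} (r s : X → X → L) : X → X → L :=
  fun a b => ⨆ c, r a c * s c b

/-- `ε`-composition of fuzzy relations:
`(r ∘_ε s)(a,b) = ⋁_ε { r(a,c) ⊗_ε s(c,b) : c ∈ X }`. -/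
noncomputable def relCompE {X : Type*} (ε : L) (r s : X → X → L) : X → X → L :=
  fun a b => (⨆ c, mulE ε (r a c) (s c b)) ⊔ ε

/-- The `ε`-truncation of a fuzzy relation. -/
def truncRel {X : Type*} (ε : L) (r : X → X → L) : X → X → L :=
  fun a b => if ε < r a b then r a b else ε

/-- A fuzzy `ε`-pre-order (`ε`-FPO) on `X`: a fuzzy relation that is reflexive,
`ε`-transitive, and equal to its own `ε`-truncation. -/
def IsEFPO {X : Type*} (ε : L) (r : X → X → L) : Prop :=
  (∀ x, r x x = 1) ∧
  (∀ a b, leE ε (relCompE ε r r a b) (r a b)) ∧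
  truncRel ε r = r

/-- A fuzzy automaton over `L` with state set `Q` and alphabet `S`. -/
structure FuzzyAutomaton (L : Type*) (Q S : Type*) where
  I : Q → L
  δ : Q → S → Q → L
  F : Q → L

open scoped Classical in
/-- The fuzzy relation `δ_w` of a word `w`. -/
noncomputable def deltaWord {Q S : Type*} (M : FuzzyAutomaton L Q S) :
    List S → Q → Q → L
  | [] => fun p q => if p = q then (1 : L) else ⊥
  | σ :: u => fun p q => ⨆ r, M.δ p σ r * deltaWord M u r q

/-- `F_w := δ_w ∘ F`. -/
noncomputable def Fword {Q S : Type*} (M : FuzzyAutomaton L Q S) (w : List S) : Q → L :=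
  fun q => ⨆ p, deltaWord M w q p * M.F p

/-- `Z` is a right `ε`-invariance on `M`: `Z` is reflexive and `Z ∘ F_w =_ε F_w`
for every word `w`. -/
noncomputable def RightEInv {Q S : Type*} (M : FuzzyAutomaton L Q S) (ε : L)
    (Z : Q → Q → L) : Prop :=
  (∀ q, Z q q = 1) ∧
  ∀ w : List S, ∀ q, eqE ε (⨆ p, Z q p * Fword M w p) (Fword M w q)

/-- `⋀_ε { F_w /_ε F_w : w ∈ Σ* }`, where `(F_w /_ε F_w)(p,q) = (F_w(q) →_ε F_w(p))`. -/
noncomputable def greatestRInv {Q S : Type*} (M : FuzzyAutomaton L Q S) (ε : L) :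
    Q → Q → L := fun p q =>
  let v := ⨅ w : List S, resE ε (Fword M w q) (Fword M w p)
  if ε < v then v else ε

section Aux
open ResiduatedLattice

lemma aux_le_one (x : L) : x ≤ 1 := (one_eq_top (L := L)) ▸ le_top

lemma aux_mul_le_mul {a b c d : L} (h1 : a ≤ b) (h2 : c ≤ d) : a * c ≤ b * d := by
  have hbc : a * c ≤ b * c := by
    have hb : b ≤ res c (b * c) := (adjunction b c (b * c)).1 le_rfl
    exact (adjunction a c (b * c)).2 (h1.trans hb)
  have hcd : b * c ≤ b * d := by
    rw [mul_comm b c, mul_comm b d]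
    have hd : d ≤ res b (d * b) := (adjunction d b (d * b)).1 le_rfl
    exact (adjunction c b (d * b)).2 (h2.trans hd)
  exact hbc.trans hcd

lemma aux_res_refl (x : L) : res x x = (1 : L) :=
  le_antisymm (aux_le_one _) ((adjunction 1 x x).1 (by rw [one_mul]))

lemma aux_gre_eq {Q S : Type*} (M : FuzzyAutomaton L Q S) (ε : L) (p q : Q) :
    greatestRInv M ε p q
      = (⨅ w : List S, resE ε (Fword M w q) (Fword M w p)) ⊔ ε := by
  unfold greatestRInv
  dsimp only
  split_ifs with h
  · exact (sup_eq_left.2 h.le).symm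
  · exact (sup_eq_right.2 (not_lt.1 h)).symm

lemma aux_eps_le_gre {Q S : Type*} (M : FuzzyAutomaton L Q S) (ε : L) (p q : Q) :
    ε ≤ greatestRInv M ε p q := by
  rw [aux_gre_eq]; exact le_sup_right

lemma aux_gre_refl {Q S : Type*} (M : FuzzyAutomaton L Q S) (ε : L) (q : Q) :
    greatestRInv M ε q q = 1 := by
  rw [aux_gre_eq]
  have hv : (⨅ w : List S, resE ε (Fword M w q) (Fword M w q)) = 1 := by
    refine le_antisymm (aux_le_one _) (le_iInf fun w => ?_)
    rw [resE, aux_res_refl]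
  rw [hv, sup_eq_left.2 (aux_le_one ε)]

/-- Key inequality: `G p q * (F_w q ⊔ ε) ≤ F_w p ⊔ ε`. -/
lemma aux_gre_key {Q S : Type*} (M : FuzzyAutomaton L Q S) (ε : L) (p q : Q)
    (w : List S) :
    greatestRInv M ε p q * (Fword M w q ⊔ ε) ≤ Fword M w p ⊔ ε := by
  rw [aux_gre_eq]
  set v := ⨅ w : List S, resE ε (Fword M w q) (Fword M w p) with hv
  rcases le_total v ε with h | h
  · rw [sup_eq_right.2 h]
    calc ε * (Fword M w q ⊔ ε) ≤ ε * 1 := aux_mul_le_mul le_rfl (aux_le_one _)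
    _ = ε := mul_one ε
    _ ≤ _ := le_sup_right
  · rw [sup_eq_left.2 h]
    have hw : v ≤ resE ε (Fword M w q) (Fword M w p) := iInf_le _ w
    exact (adjunction _ _ _).2 hw

/-- `ε`-transitivity core: `G p c * G c q ≤ G p q`. -/
lemma aux_gre_trans {Q S : Type*} (M : FuzzyAutomaton L Q S) (ε : L) (p c q : Q) :
    greatestRInv M ε p c * greatestRInv M ε c q ≤ greatestRInv M ε p q := by
  rw [aux_gre_eq M ε p c, aux_gre_eq M ε c q, aux_gre_eq M ε p q]
  set v1 := ⨅ w : List S, resE ε (Fword M w c) (Fword M w p) with hv1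
  set v2 := ⨅ w : List S, resE ε (Fword M w q) (Fword M w c) with hv2
  set v3 := ⨅ w : List S, resE ε (Fword M w q) (Fword M w p) with hv3
  have heps1 : ∀ x : L, x * ε ≤ ε := fun x =>
    (aux_mul_le_mul (aux_le_one x) le_rfl).trans (le_of_eq (one_mul ε))
  have heps2 : ∀ x : L, ε * x ≤ ε := fun x =>
    (aux_mul_le_mul le_rfl (aux_le_one x)).trans (le_of_eq (mul_one ε))
  rcases le_total v1 ε with h1 | h1
  · rw [sup_eq_right.2 h1]; exact (heps2 _).trans le_sup_right
  rcases le_total v2 ε with h2 | h2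
  · rw [sup_eq_left.2 h1, sup_eq_right.2 h2]
    exact (heps1 _).trans le_sup_right
  rw [sup_eq_left.2 h1, sup_eq_left.2 h2]
  refine le_trans ?_ (le_sup_left : v3 ≤ v3 ⊔ ε)
  refine le_iInf fun w => (adjunction _ _ _).1 ?_
  rw [mul_assoc]
  have h2w : v2 * (Fword M w q ⊔ ε) ≤ Fword M w c ⊔ ε :=
    (adjunction _ _ _).2 (iInf_le _ w)
  have h1w : v1 * (Fword M w c ⊔ ε) ≤ Fword M w p ⊔ ε :=
    (adjunction _ _ _).2 (iInf_le _ w)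
  exact (aux_mul_le_mul le_rfl h2w).trans h1w

end Aux

theorem stmt_18 {Q S : Type*} (M : FuzzyAutomaton L Q S) (ε : L) :
    RightEInv M ε (greatestRInv M ε) ∧
    (∀ Z : Q → Q → L, RightEInv M ε Z → ∀ p q, Z p q ≤ greatestRInv M ε p q) ∧
    IsEFPO ε (greatestRInv M ε) := by
  open ResiduatedLattice in
  refine ⟨⟨aux_gre_refl M ε, fun w q => ?_⟩, fun Z hZ p q => ?_, aux_gre_refl M ε,
    fun p q => ?_, ?_⟩
  · -- eqE ε (⨆ p, G q p * F_w p) (F_w q)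
    constructor
    · -- sup ≤_ε F_w q
      have hsup : (⨆ p, greatestRInv M ε q p * Fword M w p) ≤ Fword M w q ⊔ ε := by
        refine iSup_le fun p => ?_
        calc greatestRInv M ε q p * Fword M w p
            ≤ greatestRInv M ε q p * (Fword M w p ⊔ ε) :=
              aux_mul_le_mul le_rfl le_sup_left
          _ ≤ Fword M w q ⊔ ε := aux_gre_key M ε q p w
      rcases le_total ε (Fword M w q) with h | h
      · exact Or.inl (by rwa [sup_eq_left.2 h] at hsup)
      · exact Or.inr (by rwa [sup_eq_right.2 h] at hsup)
    · refine Or.inl ?_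
      have : greatestRInv M ε q q * Fword M w q ≤
          ⨆ p, greatestRInv M ε q p * Fword M w p :=
            le_iSup (fun p => greatestRInv M ε q p * Fword M w p) q
      rwa [aux_gre_refl, one_mul] at this
  · -- greatness
    rw [aux_gre_eq]
    refine le_trans (le_iInf fun w => ?_) le_sup_left
    refine (adjunction _ _ _).1 ?_
    have hsup : (⨆ r, Z p r * Fword M w r) ≤ Fword M w p ⊔ ε := by
      rcases (hZ.2 w p).1 with h | h
      · exact h.trans le_sup_left
      · exact h.trans le_sup_right
    rcases le_total ε (Fword M w q) with h | h
    · rw [sup_eq_left.2 h]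
      exact (le_iSup (fun r => Z p r * Fword M w r) q).trans hsup
    · rw [sup_eq_right.2 h]
      calc Z p q * ε ≤ 1 * ε := aux_mul_le_mul (aux_le_one _) le_rfl
        _ = ε := one_mul ε
        _ ≤ _ := le_sup_right
  · -- ε-transitivity
    refine Or.inl ?_
    refine sup_le (iSup_le fun c => ?_) (aux_eps_le_gre M ε p q)
    unfold mulE
    split_ifs with h
    · exact aux_gre_trans M ε p c q
    · exact aux_eps_le_gre M ε p q
  · -- truncation
    funext p q
    unfold truncRel
    split_ifs with h
    · rfl
    · exact le_antisymm (aux_eps_le_gre M ε p q) (not_lt.1 h)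
end

section
/- Let A = ⟨Q, Σ, I, δ, F⟩ be a fuzzy automaton over a linear complete residuated lattice, ε ∈ L, and Z an ε-FPO on Q that is a right ε-invariance on A (Z ∘ F_w =_ε F_w for all w ∈ Σ*). Then the (Z,ε)-afterset fuzzy automaton A_{Z,ε} is ε-equivalent to A: for every word w ∈ Σ*, L(A_{Z,ε})(w) =_ε L(A)(w). -/
variable {L : Type*} [ResiduatedLattice L]

/-- The fuzzy language recognized by `M`: `L(M)(w) = I ∘ δ_w ∘ F`. -/
noncomputable def lang {Q S : Type*} (M : FuzzyAutomaton L Q S) (w : List S) : L :=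
  ⨆ p, ⨆ q, M.I p * deltaWord M w p q * M.F q

/-- The `(Z,ε)`-afterset fuzzy automaton of `M`, with each afterset `Z_q` represented by
the state `q` (states with equal aftersets carry identical initial, transition, and final
degrees, so this representative-based automaton recognizes the same fuzzy language as the
quotient automaton on `Q/Z`):
`I'(Z_q) = I ∘_ε Z^q`, `δ'(Z_q,σ,Z_p) = Z_q ∘_ε δ_σ ∘_ε Z^p`, `F'(Z_p) = Z_p ∘_ε F`. -/
noncomputable def aftersetAut {Q S : Type*} (M : FuzzyAutomaton L Q S) (ε : L)
    (Z : Q → Q → L) : FuzzyAutomaton L Q S where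
  I := fun q => (⨆ p, mulE ε (M.I p) (Z p q)) ⊔ ε
  δ := fun q σ p =>
    (⨆ t, mulE ε ((⨆ s, mulE ε (Z q s) (M.δ s σ t)) ⊔ ε) (Z t p)) ⊔ ε
  F := fun p => (⨆ s, mulE ε (Z p s) (M.F s)) ⊔ ε

section Helpers

open ResiduatedLattice

variable {ε x y a b c d : L}

lemma rl_mul_le_mul_right (h : a ≤ b) (c : L) : a * c ≤ b * c :=
  (adjunction a c (b * c)).mpr (h.trans ((adjunction b c (b * c)).mp le_rfl))

lemma rl_mul_le_mul_left (h : a ≤ b) (c : L) : c * a ≤ c * b := by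
  rw [mul_comm c a, mul_comm c b]; exact rl_mul_le_mul_right h c

lemma rl_mul_le_mul (h1 : a ≤ b) (h2 : c ≤ d) : a * c ≤ b * d :=
  (rl_mul_le_mul_right h1 c).trans (rl_mul_le_mul_left h2 b)

lemma rl_mul_le_left (a b : L) : a * b ≤ a := by
  have : a * b ≤ a * 1 :=
    rl_mul_le_mul_left (by rw [ResiduatedLattice.one_eq_top]; exact le_top) a
  simpa using this

lemma rl_mul_le_right (a b : L) : a * b ≤ b := by
  rw [mul_comm]; exact rl_mul_le_left b a

lemma rl_iSup_mul {ι : Sort*} (f : ι → L) (a : L) : (⨆ i, f i) * a = ⨆ i, f i * a := by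
  apply le_antisymm
  · rw [adjunction]
    exact iSup_le fun i => (adjunction _ _ _).mp (le_iSup (fun i => f i * a) i)
  · exact iSup_le fun i => rl_mul_le_mul_right (le_iSup f i) a

lemma rl_mul_iSup {ι : Sort*} (a : L) (f : ι → L) : a * (⨆ i, f i) = ⨆ i, a * f i := by
  rw [mul_comm, rl_iSup_mul]
  simp [mul_comm]

lemma mulE_eq (ε x y : L) : mulE ε x y = x * y ⊔ ε := by
  unfold mulE
  split
  · next h => exact (sup_eq_left.mpr h.le).symm
  · next h => exact (sup_eq_right.mpr (not_lt.mp h)).symm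

lemma iSup_sup_eps {ι : Sort*} (f : ι → L) (ε : L) :
    (⨆ i, f i ⊔ ε) ⊔ ε = (⨆ i, f i) ⊔ ε := by
  apply le_antisymm
  · exact sup_le (iSup_le fun i =>
      sup_le (le_sup_of_le_left (le_iSup f i)) le_sup_right) le_sup_right
  · exact sup_le_sup_right (iSup_mono fun i => le_sup_left) ε

lemma rl_sup_mul_le (a b c : L) : (a ⊔ b) * c ≤ a * c ⊔ b * c := by
  rcases le_total a b with h | h
  · rw [sup_eq_right.mpr h]; exact le_sup_right
  · rw [sup_eq_left.mpr h]; exact le_sup_left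

lemma rl_mul_sup_le (a b c : L) : a * (b ⊔ c) ≤ a * b ⊔ a * c := by
  rw [mul_comm a (b ⊔ c), mul_comm a b, mul_comm a c]; exact rl_sup_mul_le b c a

lemma mul_sup_le_eps (a b : L) (ε : L) : a * (b ⊔ ε) ≤ a * b ⊔ ε :=
  (rl_mul_sup_le a b ε).trans (sup_le_sup_left (rl_mul_le_right a ε) _)

lemma sup_eps_mul_le (a b : L) (ε : L) : (a ⊔ ε) * b ≤ a * b ⊔ ε :=
  (rl_sup_mul_le a ε b).trans (sup_le_sup_left (rl_mul_le_left ε b) _)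

lemma mul_sup_eps (a b : L) (ε : L) : (a ⊔ ε) * (b ⊔ ε) ≤ a * b ⊔ ε := by
  refine (sup_eps_mul_le a (b ⊔ ε) ε).trans (sup_le ?_ le_sup_right)
  exact (mul_sup_le_eps a b ε).trans le_rfl

lemma le_eps_trans {z : L} (h1 : x ≤ y ⊔ ε) (h2 : y ≤ z ⊔ ε) : x ≤ z ⊔ ε :=
  h1.trans (sup_le h2 le_sup_right)

lemma leE_iff : leE ε x y ↔ x ≤ y ⊔ ε := le_sup_iff.symm

section Automata
variable {Q S : Type*}

lemma Fword_nil (M : FuzzyAutomaton L Q S) (q : Q) :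
    Fword M ([] : List S) q = M.F q := by
  unfold Fword
  simp only [deltaWord]
  apply le_antisymm
  · apply iSup_le
    intro p
    by_cases h : q = p
    · subst h; simp
    · rw [if_neg h]
      exact ((rl_mul_le_left _ _).trans bot_le)
  · exact le_iSup_of_le q (by simp)

lemma Fword_cons (M : FuzzyAutomaton L Q S) (σ : S) (u : List S) (q : Q) :
    Fword M (σ :: u) q = ⨆ r, M.δ q σ r * Fword M u r := by
  unfold Fword
  simp only [deltaWord]
  simp_rw [rl_iSup_mul, mul_assoc]
  rw [iSup_comm]
  simp_rw [rl_mul_iSup]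

lemma lang_eq (M : FuzzyAutomaton L Q S) (w : List S) :
    lang M w = ⨆ p, M.I p * Fword M w p := by
  unfold lang Fword
  simp_rw [rl_mul_iSup, mul_assoc]

variable (M : FuzzyAutomaton L Q S) (ε : L) (Z : Q → Q → L)

lemma aI_eq (p : Q) :
    (aftersetAut M ε Z).I p = (⨆ s, M.I s * Z s p) ⊔ ε := by
  show (⨆ s, mulE ε (M.I s) (Z s p)) ⊔ ε = _
  simp_rw [mulE_eq]
  exact iSup_sup_eps _ _

lemma aF_eq (p : Q) :
    (aftersetAut M ε Z).F p = (⨆ s, Z p s * M.F s) ⊔ ε := by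
  show (⨆ s, mulE ε (Z p s) (M.F s)) ⊔ ε = _
  simp_rw [mulE_eq]
  exact iSup_sup_eps _ _

lemma aδ_le (q : Q) (σ : S) (p : Q) :
    (aftersetAut M ε Z).δ q σ p ≤ (⨆ t, (⨆ s, Z q s * M.δ s σ t) * Z t p) ⊔ ε := by
  show (⨆ t, mulE ε ((⨆ s, mulE ε (Z q s) (M.δ s σ t)) ⊔ ε) (Z t p)) ⊔ ε ≤ _
  simp_rw [mulE_eq, iSup_sup_eps]
  calc (⨆ t, ((⨆ s, Z q s * M.δ s σ t) ⊔ ε) * Z t p) ⊔ ε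
      ≤ (⨆ t, (⨆ s, Z q s * M.δ s σ t) * Z t p ⊔ ε) ⊔ ε :=
        sup_le_sup_right (iSup_mono fun t => sup_eps_mul_le _ _ _) ε
    _ = (⨆ t, (⨆ s, Z q s * M.δ s σ t) * Z t p) ⊔ ε := iSup_sup_eps _ _

variable (hrefl : ∀ q, Z q q = 1)
include hrefl

lemma aI_ge (p : Q) : M.I p ≤ (aftersetAut M ε Z).I p := by
  rw [aI_eq]
  exact le_sup_of_le_left (le_iSup_of_le p (by rw [hrefl p, mul_one]))

lemma aF_ge (p : Q) : M.F p ≤ (aftersetAut M ε Z).F p := by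
  rw [aF_eq]
  exact le_sup_of_le_left (le_iSup_of_le p (by rw [hrefl p, one_mul]))

lemma aδ_ge (q : Q) (σ : S) (p : Q) :
    M.δ q σ p ≤ (aftersetAut M ε Z).δ q σ p := by
  show _ ≤ (⨆ t, mulE ε ((⨆ s, mulE ε (Z q s) (M.δ s σ t)) ⊔ ε) (Z t p)) ⊔ ε
  refine le_sup_of_le_left (le_iSup_of_le p ?_)
  rw [mulE_eq, hrefl p, mul_one]
  refine le_sup_of_le_left (le_sup_of_le_left (le_iSup_of_le q ?_))
  rw [mulE_eq, hrefl q, one_mul]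
  exact le_sup_left

lemma main_bound
    (hinv : ∀ w : List S, ∀ q, (⨆ p, Z q p * Fword M w p) ≤ Fword M w q ⊔ ε) :
    ∀ w : List S, ∀ q,
      Fword (aftersetAut M ε Z) w q ≤ Fword M w q ⊔ ε ∧
      Fword M w q ≤ Fword (aftersetAut M ε Z) w q ⊔ ε := by
  intro w
  induction w with
  | nil =>
    intro q
    constructor
    · rw [Fword_nil, Fword_nil, aF_eq]
      refine sup_le ?_ le_sup_right
      have h := hinv [] q
      simp_rw [Fword_nil] at h
      exact h
    · rw [Fword_nil, Fword_nil]
      exact le_sup_of_le_left (aF_ge M ε Z hrefl q)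
  | cons σ u ih =>
    intro q
    constructor
    · rw [Fword_cons (aftersetAut M ε Z)]
      apply iSup_le
      intro p
      have h1 : (aftersetAut M ε Z).δ q σ p * Fword (aftersetAut M ε Z) u p ≤
          ((⨆ t, (⨆ s, Z q s * M.δ s σ t) * Z t p) ⊔ ε) * (Fword M u p ⊔ ε) :=
        rl_mul_le_mul (aδ_le M ε Z q σ p) (ih p).1
      have h2 := mul_sup_eps (⨆ t, (⨆ s, Z q s * M.δ s σ t) * Z t p) (Fword M u p) ε
      have h3 : (⨆ t, (⨆ s, Z q s * M.δ s σ t) * Z t p) * Fword M u p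
          ≤ (⨆ t, (⨆ s, Z q s * M.δ s σ t) * Fword M u t) ⊔ ε := by
        rw [rl_iSup_mul]
        refine iSup_le fun t => ?_
        rw [mul_assoc]
        have hz : Z t p * Fword M u p ≤ Fword M u t ⊔ ε :=
          (le_iSup (fun p' => Z t p' * Fword M u p') p).trans (hinv u t)
        exact le_eps_trans
          (le_trans (rl_mul_le_mul_left hz _) (mul_sup_le_eps _ _ _))
          (le_sup_of_le_left (le_iSup (fun t => (⨆ s, Z q s * M.δ s σ t) * Fword M u t) t))
      have h6 : (⨆ t, (⨆ s, Z q s * M.δ s σ t) * Fword M u t)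
          = ⨆ s, Z q s * Fword M (σ :: u) s := by
        simp_rw [rl_iSup_mul, mul_assoc]
        rw [iSup_comm]
        simp_rw [← rl_mul_iSup, Fword_cons]
      have h7 : (⨆ s, Z q s * Fword M (σ :: u) s) ≤ Fword M (σ :: u) q ⊔ ε :=
        hinv (σ :: u) q
      refine le_eps_trans (le_eps_trans (h1.trans h2) h3) ?_
      rw [h6] at *
      exact h7
    · rw [Fword_cons M]
      apply iSup_le
      intro r
      have h1 : M.δ q σ r * Fword M u r ≤
          (aftersetAut M ε Z).δ q σ r * (Fword (aftersetAut M ε Z) u r ⊔ ε) :=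
        rl_mul_le_mul (aδ_ge M ε Z hrefl q σ r) (ih r).2
      refine h1.trans ((mul_sup_le_eps _ _ _).trans (sup_le_sup_right ?_ ε))
      rw [Fword_cons (aftersetAut M ε Z)]
      exact le_iSup (fun r => (aftersetAut M ε Z).δ q σ r * Fword (aftersetAut M ε Z) u r) r

end Automata
end Helpers

theorem stmt_19 {Q S : Type*} (M : FuzzyAutomaton L Q S) (ε : L) (Z : Q → Q → L)
    (hfpo : IsEFPO ε Z) (hinv : RightEInv M ε Z) :
    ∀ w : List S, eqE ε (lang (aftersetAut M ε Z) w) (lang M w) := by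
  obtain ⟨hrefl, hinv2⟩ := hinv
  have hinv' : ∀ w : List S, ∀ q, (⨆ p, Z q p * Fword M w p) ≤ Fword M w q ⊔ ε :=
    fun w q => leE_iff.mp (hinv2 w q).1
  intro w
  have hmain := main_bound M ε Z hrefl hinv' w
  constructor
  · -- lang A' w ≤_ε lang M w
    rw [leE_iff, lang_eq, lang_eq]
    apply iSup_le
    intro p
    have h1 : (aftersetAut M ε Z).I p * Fword (aftersetAut M ε Z) w p ≤
        ((⨆ s, M.I s * Z s p) ⊔ ε) * (Fword M w p ⊔ ε) := by
      rw [← aI_eq M ε Z p]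
      exact rl_mul_le_mul le_rfl (hmain p).1
    refine le_eps_trans (h1.trans (mul_sup_eps _ _ _)) ?_
    rw [rl_iSup_mul]
    refine iSup_le fun s => ?_
    rw [mul_assoc]
    have hz : Z s p * Fword M w p ≤ Fword M w s ⊔ ε :=
      (le_iSup (fun p' => Z s p' * Fword M w p') p).trans (hinv' w s)
    exact le_eps_trans
      (le_trans (rl_mul_le_mul_left hz _) (mul_sup_le_eps _ _ _))
      (le_sup_of_le_left (le_iSup (fun s => M.I s * Fword M w s) s))
  · -- lang M w ≤_ε lang A' w
    rw [leE_iff, lang_eq, lang_eq]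
    apply iSup_le
    intro p
    have h1 : M.I p * Fword M w p ≤
        (aftersetAut M ε Z).I p * (Fword (aftersetAut M ε Z) w p ⊔ ε) :=
      rl_mul_le_mul (aI_ge M ε Z hrefl p) (hmain p).2
    refine h1.trans ((mul_sup_le_eps _ _ _).trans (sup_le_sup_right ?_ ε))
    exact le_iSup (fun p => (aftersetAut M ε Z).I p * Fword (aftersetAut M ε Z) w p) p
end
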